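/- If D is a demonstrable I-type of system F containing exactly one quantifier, then D = ∀X { X → X }. -/

import Mathlib

set_option maxHeartbeats 1000000


/-- Untyped λ-terms in de Bruijn representation. -/
inductive Trm : Type
  | var : ℕ → Trm
  | app : Trm → Trm → Trm
  | lam : Trm → Trm
  deriving DecidableEq

namespace Trm

/-- The set of free variables of a term (as de Bruijn indices). -/
def fv : Trm → Set ℕ
  | var n => {n}
  | app u v => fv u ∪ fv v
  | lam u => {n | n + 1 ∈ fv u}

/-- A term is closed if it has no free variables. -/
def Closed (t : Trm) : Prop := fv t = ∅

/-- λI-terms: abstraction is allowed only on variables occurring free in the body. -/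
inductive IsLI : Trm → Prop
  | var (n : ℕ) : IsLI (var n)
  | app {u v : Trm} : IsLI u → IsLI v → IsLI (app u v)
  | lam {u : Trm} : IsLI u → 0 ∈ fv u → IsLI (lam u)

/-- Lifting of free variables ≥ d. -/
def lift (d : ℕ) : Trm → Trm
  | var n => if n < d then var n else var (n + 1)
  | app u v => app (lift d u) (lift d v)
  | lam u => lam (lift (d + 1) u)

def liftTimes (k : ℕ) (t : Trm) : Trm := (lift 0)^[k] t

/-- Capture-avoiding substitution of the k-th free variable. -/
def subst : Trm → ℕ → Trm → Trm
  | var n, k, v => if n < k then var n else if n = k then liftTimes k v else var (n - 1)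
  | app a b, k, v => app (subst a k v) (subst b k v)
  | lam a, k, v => lam (subst a (k + 1) v)

end Trm

/-- One step of β-reduction. -/
inductive Beta : Trm → Trm → Prop
  | beta {u v : Trm} : Beta (.app (.lam u) v) (u.subst 0 v)
  | appL {u u' v : Trm} : Beta u u' → Beta (.app u v) (.app u' v)
  | appR {u v v' : Trm} : Beta v v' → Beta (.app u v) (.app u v')
  | lam {u u' : Trm} : Beta u u' → Beta (.lam u) (.lam u')

/-- One step of η-reduction: λx (u)x → u when x ∉ Fv(u). -/
inductive Eta : Trm → Trm → Prop
  | eta (u : Trm) : Eta (.lam (.app (u.lift 0) (.var 0))) u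
  | appL {u u' v : Trm} : Eta u u' → Eta (.app u v) (.app u' v)
  | appR {u v v' : Trm} : Eta v v' → Eta (.app u v) (.app u v')
  | lam {u u' : Trm} : Eta u u' → Eta (.lam u) (.lam u')

/-- β-reduction (reflexive-transitive closure). -/
def BetaStar : Trm → Trm → Prop := Relation.ReflTransGen Beta

/-- βη-reduction (reflexive-transitive closure of the union of β and η). -/
def BetaEtaStar : Trm → Trm → Prop := Relation.ReflTransGen (fun a b => Beta a b ∨ Eta a b)

/-- η-reduction (reflexive-transitive closure). -/
def EtaStar : Trm → Trm → Prop := Relation.ReflTransGen Eta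

/-- A term is β-normal iff it contains no β-redex. -/
def BetaNormal (t : Trm) : Prop := ∀ u, ¬ Beta t u

/-- A term is βη-normal iff it contains neither a β-redex nor an η-redex. -/
def BetaEtaNormal (t : Trm) : Prop := ∀ u, ¬ Beta t u ∧ ¬ Eta t u

/-- A term is strongly normalizable iff every β-reduction sequence from it is finite. -/
def StronglyNormalizable (t : Trm) : Prop :=
  ¬ ∃ f : ℕ → Trm, f 0 = t ∧ ∀ n, Beta (f n) (f (n + 1))

/-- Types of system F in de Bruijn representation. -/
inductive Ty : Type
  | var : ℕ → Ty
  | arr : Ty → Ty → Ty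
  | all : Ty → Ty
  deriving DecidableEq

namespace Ty

/-- Free type variables. -/
def tfv : Ty → Set ℕ
  | var n => {n}
  | arr A B => tfv A ∪ tfv B
  | all A => {n | n + 1 ∈ tfv A}

/-- Lifting of free type variables ≥ d. -/
def tlift (d : ℕ) : Ty → Ty
  | var n => if n < d then var n else var (n + 1)
  | arr A B => arr (tlift d A) (tlift d B)
  | all A => all (tlift (d + 1) A)

def tliftTimes (k : ℕ) (A : Ty) : Ty := (tlift 0)^[k] A

/-- Substitution of the k-th free type variable. -/
def tsubst : Ty → ℕ → Ty → Ty
  | var n, k, G => if n < k then var n else if n = k then tliftTimes k G else var (n - 1)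
  | arr A B, k, G => arr (tsubst A k G) (tsubst B k G)
  | all A, k, G => all (tsubst A (k + 1) G)

/-- Proper types: in every subtype ∀X E, the variable X occurs free in E. -/
def Proper : Ty → Prop
  | var _ => True
  | arr A B => Proper A ∧ Proper B
  | all A => Proper A ∧ 0 ∈ tfv A

/-- Closed types. -/
def ClosedTy (A : Ty) : Prop := tfv A = ∅

end Ty

/-- Typing judgments of system F (restricted to proper types:
the rule (∀e) requires X free in A and instantiates at proper types only). -/
inductive Typing : List Ty → Trm → Ty → Prop
  | ax {Γ : List Ty} {n : ℕ} {A : Ty} :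
      Γ[n]? = some A → (∀ B ∈ Γ, B.Proper) → Typing Γ (.var n) A
  | arrI {Γ : List Ty} {A B : Ty} {t : Trm} :
      A.Proper → Typing (A :: Γ) t B → Typing Γ (.lam t) (.arr A B)
  | arrE {Γ : List Ty} {A B : Ty} {u v : Trm} :
      Typing Γ u (.arr A B) → Typing Γ v A → Typing Γ (.app u v) B
  | allI {Γ : List Ty} {A : Ty} {t : Trm} :
      0 ∈ Ty.tfv A → Typing (Γ.map (Ty.tlift 0)) t A → Typing Γ t (.all A)
  | allE {Γ : List Ty} {A : Ty} {t : Trm} (G : Ty) :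
      G.Proper → 0 ∈ Ty.tfv A → Typing Γ t (.all A) → Typing Γ t (A.tsubst 0 G)

/-- A closed type D is an I-type iff every closed β-normal term of type D is a λI-term. -/
def IType (D : Ty) : Prop :=
  Ty.ClosedTy D ∧ ∀ t : Trm, BetaNormal t → Trm.Closed t → Typing [] t D → Trm.IsLI t

/-- Λ(D): the set of closed βη-normal terms of type D. -/
def Lam (D : Ty) : Set Trm :=
  {t | BetaEtaNormal t ∧ Trm.Closed t ∧ Typing [] t D}

/-- Number of second-order quantifiers occurring in a type. -/
def qCount : Ty → ℕ
  | .var _ => 0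
  | .arr A B => qCount A + qCount B
  | .all A => qCount A + 1
namespace Stmt18

/-! ### Semantics of types in Prop -/

def consR (p : Prop) (ρ : ℕ → Prop) : ℕ → Prop
  | 0 => p
  | n+1 => ρ n

def sem : Ty → (ℕ → Prop) → Prop
  | .var n, ρ => ρ n
  | .arr A B, ρ => sem A ρ → sem B ρ
  | .all A, ρ => ∀ p : Prop, sem A (consR p ρ)

lemma sem_ext (A : Ty) {ρ₁ ρ₂ : ℕ → Prop} (h : ∀ n, ρ₁ n = ρ₂ n) :
    sem A ρ₁ = sem A ρ₂ := by
  rw [show ρ₁ = ρ₂ from funext h]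

lemma sem_tlift (A : Ty) : ∀ (d : ℕ) (ρ : ℕ → Prop),
    sem (Ty.tlift d A) ρ = sem A (fun n => if n < d then ρ n else ρ (n+1)) := by
  induction A with
  | var m =>
    intro d ρ
    by_cases h : m < d <;> simp [Ty.tlift, sem, h]
  | arr A B ih1 ih2 =>
    intro d ρ
    simp only [Ty.tlift, sem]
    rw [ih1, ih2]
  | all A ih =>
    intro d ρ
    simp only [Ty.tlift, sem]
    refine propext (forall_congr' fun p => ?_)
    rw [ih]
    refine iff_of_eq (sem_ext A fun n => ?_)
    cases n with
    | zero => simp [consR]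
    | succ m => by_cases h : m < d <;> simp [consR, h, Nat.succ_lt_succ_iff]

lemma sem_tliftTimes_succ (G : Ty) (k : ℕ) (p : Prop) (ρ : ℕ → Prop) :
    sem (Ty.tliftTimes (k+1) G) (consR p ρ) = sem (Ty.tliftTimes k G) ρ := by
  rw [Ty.tliftTimes, Function.iterate_succ_apply', sem_tlift]
  exact sem_ext _ (fun n => by simp [consR])

lemma sem_tsubst (G : Ty) : ∀ (A : Ty) (k : ℕ) (ρ : ℕ → Prop),
    sem (Ty.tsubst A k G) ρ =
      sem A (fun n => if n < k then ρ n
        else if n = k then sem (Ty.tliftTimes k G) ρ else ρ (n-1)) := by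
  intro A
  induction A with
  | var m =>
    intro k ρ
    by_cases h1 : m < k
    · simp [Ty.tsubst, sem, h1]
    · by_cases h2 : m = k <;> simp [Ty.tsubst, sem, h1, h2]
  | arr A B ih1 ih2 =>
    intro k ρ
    simp only [Ty.tsubst, sem]
    rw [ih1, ih2]
  | all A ih =>
    intro k ρ
    simp only [Ty.tsubst, sem]
    refine propext (forall_congr' fun p => ?_)
    rw [ih]
    refine iff_of_eq (sem_ext A fun n => ?_)
    cases n with
    | zero => simp [consR]
    | succ m =>
      by_cases h1 : m < k
      · simp [consR, h1, Nat.succ_lt_succ_iff]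
      · by_cases h2 : m = k
        · subst h2
          simp [consR, h1, Nat.succ_lt_succ_iff, sem_tliftTimes_succ]
        · have hm : 1 ≤ m := by omega
          simp only [consR]
          rw [if_neg (by omega), if_neg (by omega), if_neg h1, if_neg h2]
          cases m with
          | zero => omega
          | succ i => simp [consR]

theorem soundness {Γ : List Ty} {t : Trm} {A : Ty} (h : Typing Γ t A) :
    ∀ ρ : ℕ → Prop, (∀ B ∈ Γ, sem B ρ) → sem A ρ := by
  induction h with
  | ax hget hprop =>
    intro ρ hΓ
    rename_i Γ n A
    have : A ∈ Γ := by
      have h' := List.getElem?_eq_some_iff.mp hget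
      obtain ⟨hlt, rfl⟩ := h'
      exact List.getElem_mem hlt
    exact hΓ _ this
  | arrI hA hB ih =>
    intro ρ hΓ hsA
    exact ih ρ (by
      intro B hB'
      rcases List.mem_cons.mp hB' with rfl | h
      · exact hsA
      · exact hΓ _ h)
  | arrE h1 h2 ih1 ih2 =>
    intro ρ hΓ
    exact ih1 ρ hΓ (ih2 ρ hΓ)
  | allI h0 ht ih =>
    intro ρ hΓ p
    refine ih (consR p ρ) ?_
    intro B hB
    rw [List.mem_map] at hB
    obtain ⟨C, hC, rfl⟩ := hB
    have he : sem (Ty.tlift 0 C) (consR p ρ) = sem C ρ := by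
      rw [sem_tlift]
      exact sem_ext C (fun n => by simp [consR])
    rw [he]
    exact hΓ C hC
  | allE G hG h0 ht ih =>
    rename_i Γ' A' t'
    intro ρ hΓ
    rw [sem_tsubst]
    have h := ih ρ hΓ (sem G ρ)
    have he : sem A' (fun n => if n < 0 then ρ n
        else if n = 0 then sem (Ty.tliftTimes 0 G) ρ else ρ (n-1))
        = sem A' (consR (sem G ρ) ρ) := by
      refine sem_ext _ fun n => ?_
      cases n with
      | zero => simp [consR, Ty.tliftTimes]
      | succ m => simp [consR]
    rw [he]
    exact h

end Stmt18

namespace Stmt18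

/-! ### Structural lemmas -/

def tsize : Ty → ℕ
  | .var _ => 1
  | .arr A B => tsize A + tsize B + 1
  | .all A => tsize A + 1

lemma tsize_pos : ∀ A : Ty, 1 ≤ tsize A := by
  intro A; cases A <;> simp [tsize]

lemma proper_of_q0 : ∀ A : Ty, qCount A = 0 → A.Proper := by
  intro A
  induction A with
  | var n => intro _; trivial
  | arr A B ih1 ih2 =>
    intro h
    simp only [qCount] at h
    exact ⟨ih1 (by omega), ih2 (by omega)⟩
  | all A ih => intro h; simp [qCount] at h

lemma tfv_nonempty : ∀ A : Ty, qCount A = 0 → (Ty.tfv A).Nonempty := by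
  intro A
  induction A with
  | var n => intro _; exact ⟨n, rfl⟩
  | arr A B ih1 ih2 =>
    intro h
    simp only [qCount] at h
    obtain ⟨m, hm⟩ := ih1 (by omega)
    exact ⟨m, Or.inl hm⟩
  | all A ih => intro h; simp [qCount] at h

/-! ### Boolean evaluation at X := False -/

def bev : Ty → Bool
  | .var _ => false
  | .arr A B => !bev A || bev B
  | .all A => bev A

lemma bridge : ∀ A : Ty, qCount A = 0 → ∀ ρ : ℕ → Prop,
    (∀ n ∈ Ty.tfv A, ¬ ρ n) → (sem A ρ ↔ bev A = true) := by
  intro A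
  induction A with
  | var n =>
    intro _ ρ hρ
    have := hρ n rfl
    simp only [sem, bev]
    constructor
    · intro h; exact absurd h this
    · intro h; exact absurd h (by simp)
  | arr A B ih1 ih2 =>
    intro hq ρ hρ
    simp only [qCount] at hq
    have hA := ih1 (by omega) ρ (fun n hn => hρ n (Or.inl hn))
    have hB := ih2 (by omega) ρ (fun n hn => hρ n (Or.inr hn))
    show (sem A ρ → sem B ρ) ↔ _
    rw [hA, hB]
    cases hb1 : bev A <;> cases hb2 : bev B <;> simp [bev, hb1, hb2]
  | all A ih => intro h; simp [qCount] at h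

end Stmt18

namespace Stmt18

/-! ### The witness constructions -/

mutual
def inh : Ty → Trm
  | .var _ => .var 0
  | .all _ => .var 0
  | .arr A B => if bev B then .lam (inh B) else .lam (prove A B 0)
termination_by A => tsize A
decreasing_by all_goals (simp [tsize]; try omega)

def prove : Ty → Ty → ℕ → Trm
  | A, .var _, j => extGo A (.var j)
  | _, .all _, j => .var j
  | A, .arr _ C, j => .lam (prove A C (j+1))
termination_by A B j => tsize A + tsize B
decreasing_by all_goals (simp [tsize]; try omega)

def extGo : Ty → Trm → Trm
  | .var _, t => t
  | .all _, t => t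
  | .arr F B, t => extGo B (.app t (inh F))
termination_by A t => tsize A
decreasing_by all_goals (simp [tsize]; try omega)
end

end Stmt18

namespace Stmt18

def GoodCtx (Γ : List Ty) : Prop := ∀ B ∈ Γ, B.Proper

lemma bev_arr_true {A B : Ty} (h : bev (.arr A B) = true) (hB : bev B = false) :
    bev A = false := by
  simp [bev, hB] at h; exact h

lemma bev_arr_false {A B : Ty} (h : bev (.arr A B) = false) :
    bev A = true ∧ bev B = false := by
  simpa [bev] using h

lemma typing_trio : ∀ N : ℕ,
    (∀ A : Ty, tsize A ≤ N → qCount A = 0 → Ty.tfv A ⊆ {0} → bev A = true →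
      ∀ Γ, GoodCtx Γ → Typing Γ (inh A) A) ∧
    (∀ A : Ty, tsize A ≤ N → qCount A = 0 → Ty.tfv A ⊆ {0} → bev A = false →
      ∀ Γ t, GoodCtx Γ → Typing Γ t A → Typing Γ (extGo A t) (Ty.var 0)) ∧
    (∀ A B : Ty, tsize A + tsize B ≤ N → qCount A = 0 → Ty.tfv A ⊆ {0} → bev A = false →
      qCount B = 0 → Ty.tfv B ⊆ {0} →
      ∀ Γ j, GoodCtx Γ → Γ[j]? = some A → Typing Γ (prove A B j) B) := by
  intro N
  induction N using Nat.strong_induction_on with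
  | _ N ih =>
  refine ⟨?_, ?_, ?_⟩
  · -- inh
    intro A hsz hq htf hb Γ hΓ
    match A with
    | .var m => simp [bev] at hb
    | .all A => simp [qCount] at hq
    | .arr A B =>
      simp only [qCount] at hq
      simp only [tsize] at hsz
      have hqA : qCount A = 0 := by omega
      have hqB : qCount B = 0 := by omega
      have htA : Ty.tfv A ⊆ {0} := fun n hn => htf (Or.inl hn)
      have htB : Ty.tfv B ⊆ {0} := fun n hn => htf (Or.inr hn)
      have hΓ' : GoodCtx (A :: Γ) := by
        intro C hC
        rcases List.mem_cons.mp hC with rfl | h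
        · exact proper_of_q0 _ hqA
        · exact hΓ _ h
      by_cases hbB : bev B = true
      · rw [show inh (.arr A B) = .lam (inh B) by rw [inh]; simp [hbB]]
        exact Typing.arrI (proper_of_q0 A hqA)
          ((ih (tsize B) (by have := tsize_pos A; omega)).1 B le_rfl hqB htB hbB _ hΓ')
      · have hbB' : bev B = false := by simpa using hbB
        have hbA : bev A = false := bev_arr_true hb hbB'
        rw [show inh (.arr A B) = .lam (prove A B 0) by rw [inh]; simp [hbB']]
        refine Typing.arrI (proper_of_q0 A hqA) ?_
        exact (ih (tsize A + tsize B) (by omega)).2.2 A B le_rfl hqA htA hbA hqB htB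
          (A :: Γ) 0 hΓ' (by simp)
  · -- extGo
    intro A hsz hq htf hb Γ t hΓ ht
    match A with
    | .var m =>
      have hm : m = 0 := htf rfl
      subst hm
      rw [extGo]
      exact ht
    | .all A => simp [qCount] at hq
    | .arr F B =>
      simp only [qCount] at hq
      simp only [tsize] at hsz
      obtain ⟨hbF, hbB⟩ := bev_arr_false hb
      have hqF : qCount F = 0 := by omega
      have hqB : qCount B = 0 := by omega
      have htF : Ty.tfv F ⊆ {0} := fun n hn => htf (Or.inl hn)
      have htB : Ty.tfv B ⊆ {0} := fun n hn => htf (Or.inr hn)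
      rw [extGo]
      refine (ih (tsize B) (by have := tsize_pos F; omega)).2.1 B le_rfl hqB htB hbB Γ _ hΓ ?_
      exact Typing.arrE ht
        ((ih (tsize F) (by have := tsize_pos B; omega)).1 F le_rfl hqF htF hbF Γ hΓ)
  · -- prove
    intro A B hsz hqA htA hbA hqB htB Γ j hΓ hget
    match B with
    | .var m =>
      have hm : m = 0 := htB rfl
      subst hm
      rw [prove]
      refine (ih (tsize A) (by simp [tsize] at hsz; omega)).2.1 A le_rfl hqA htA hbA Γ _ hΓ ?_
      exact Typing.ax hget hΓ
    | .all B => simp [qCount] at hqB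
    | .arr F C =>
      simp only [qCount] at hqB
      simp only [tsize] at hsz
      have hqF : qCount F = 0 := by omega
      have hqC : qCount C = 0 := by omega
      have htF : Ty.tfv F ⊆ {0} := fun n hn => htB (Or.inl hn)
      have htC : Ty.tfv C ⊆ {0} := fun n hn => htB (Or.inr hn)
      rw [prove]
      refine Typing.arrI (proper_of_q0 F hqF) ?_
      refine (ih (tsize A + tsize C) (by have := tsize_pos F; omega)).2.2 A C le_rfl
        hqA htA hbA hqC htC (F :: Γ) (j+1) ?_ (by simpa using hget)
      intro X hX
      rcases List.mem_cons.mp hX with rfl | h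
      · exact proper_of_q0 _ hqF
      · exact hΓ _ h

end Stmt18

namespace Stmt18

/-! ### Normal forms -/

mutual
inductive Ne : Trm → Prop
  | var (n : ℕ) : Ne (.var n)
  | app {u v : Trm} : Ne u → Nf v → Ne (.app u v)

inductive Nf : Trm → Prop
  | ne {u : Trm} : Ne u → Nf u
  | lam {u : Trm} : Nf u → Nf (.lam u)
end

lemma betaNormal_aux : ∀ t : Trm, (Ne t → BetaNormal t) ∧ (Nf t → BetaNormal t) := by
  intro t
  induction t with
  | var n =>
    constructor <;> intro _ u hb <;> cases hb
  | app a b iha ihb =>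
    have hne : Ne (.app a b) → BetaNormal (.app a b) := by
      intro h u hb
      cases h with
      | app hna hnb =>
        cases hb with
        | beta => cases hna
        | appL h' => exact iha.1 hna _ h'
        | appR h' => exact ihb.2 hnb _ h'
    refine ⟨hne, fun h => ?_⟩
    cases h with
    | ne h' => exact hne h'
  | lam a ihl =>
    refine ⟨(fun h => nomatch h), fun h u hb => ?_⟩
    cases hb with
    | lam hb' =>
      cases h with
      | ne h' => cases h'
      | lam h' => exact ihl.2 h' _ hb'

lemma betaNormal_of_nf {t : Trm} (h : Nf t) : BetaNormal t := (betaNormal_aux t).2 h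

lemma nf_trio : ∀ N : ℕ,
    (∀ A : Ty, tsize A ≤ N → qCount A = 0 → bev A = true → Nf (inh A)) ∧
    (∀ A : Ty, tsize A ≤ N → qCount A = 0 → bev A = false →
      ∀ t, Ne t → Ne (extGo A t)) ∧
    (∀ A B : Ty, tsize A + tsize B ≤ N → qCount A = 0 → bev A = false → qCount B = 0 →
      ∀ j, Nf (prove A B j)) := by
  intro N
  induction N using Nat.strong_induction_on with
  | _ N ih =>
  refine ⟨?_, ?_, ?_⟩
  · intro A hsz hq hb
    match A with
    | .var m => simp [bev] at hb
    | .all A => simp [qCount] at hq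
    | .arr A B =>
      simp only [qCount] at hq
      simp only [tsize] at hsz
      by_cases hbB : bev B = true
      · rw [show inh (.arr A B) = .lam (inh B) by rw [inh]; simp [hbB]]
        exact Nf.lam ((ih (tsize B) (by have := tsize_pos A; omega)).1 B le_rfl (by omega) hbB)
      · have hbB' : bev B = false := by simpa using hbB
        have hbA : bev A = false := bev_arr_true hb hbB'
        rw [show inh (.arr A B) = .lam (prove A B 0) by rw [inh]; simp [hbB']]
        exact Nf.lam ((ih (tsize A + tsize B) (by omega)).2.2 A B le_rfl (by omega) hbA (by omega) 0)
  · intro A hsz hq hb t hnt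
    match A with
    | .var m => rw [extGo]; exact hnt
    | .all A => simp [qCount] at hq
    | .arr F B =>
      simp only [qCount] at hq
      simp only [tsize] at hsz
      obtain ⟨hbF, hbB⟩ := bev_arr_false hb
      rw [extGo]
      refine (ih (tsize B) (by have := tsize_pos F; omega)).2.1 B le_rfl (by omega) hbB _ ?_
      exact Ne.app hnt ((ih (tsize F) (by have := tsize_pos B; omega)).1 F le_rfl (by omega) hbF)
  · intro A B hsz hqA hbA hqB j
    match B with
    | .var m =>
      rw [prove]
      exact Nf.ne ((ih (tsize A) (by simp [tsize] at hsz; omega)).2.1 A le_rfl hqA hbA _ (Ne.var j))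
    | .all B => simp [qCount] at hqB
    | .arr F C =>
      simp only [qCount] at hqB
      simp only [tsize] at hsz
      rw [prove]
      exact Nf.lam ((ih (tsize A + tsize C) (by have := tsize_pos F; omega)).2.2 A C le_rfl
        hqA hbA (by omega) (j+1))

/-! ### Free variables of the constructions -/

lemma fv_trio : ∀ N : ℕ,
    (∀ A : Ty, tsize A ≤ N → qCount A = 0 → bev A = true → ∀ n, n ∉ Trm.fv (inh A)) ∧
    (∀ A : Ty, tsize A ≤ N → qCount A = 0 → bev A = false →
      ∀ t n, n ∈ Trm.fv (extGo A t) ↔ n ∈ Trm.fv t) ∧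
    (∀ A B : Ty, tsize A + tsize B ≤ N → qCount A = 0 → bev A = false → qCount B = 0 →
      ∀ j n, n ∈ Trm.fv (prove A B j) ↔ n = j) := by
  intro N
  induction N using Nat.strong_induction_on with
  | _ N ih =>
  refine ⟨?_, ?_, ?_⟩
  · intro A hsz hq hb n
    match A with
    | .var m => simp [bev] at hb
    | .all A => simp [qCount] at hq
    | .arr A B =>
      simp only [qCount] at hq
      simp only [tsize] at hsz
      by_cases hbB : bev B = true
      · rw [show inh (.arr A B) = .lam (inh B) by rw [inh]; simp [hbB]]
        simp only [Trm.fv, Set.mem_setOf_eq]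
        exact (ih (tsize B) (by have := tsize_pos A; omega)).1 B le_rfl (by omega) hbB (n+1)
      · have hbB' : bev B = false := by simpa using hbB
        have hbA : bev A = false := bev_arr_true hb hbB'
        rw [show inh (.arr A B) = .lam (prove A B 0) by rw [inh]; simp [hbB']]
        simp only [Trm.fv, Set.mem_setOf_eq]
        rw [(ih (tsize A + tsize B) (by omega)).2.2 A B le_rfl (by omega) hbA (by omega) 0 (n+1)]
        omega
  · intro A hsz hq hb t n
    match A with
    | .var m => rw [extGo]
    | .all A => simp [qCount] at hq
    | .arr F B =>
      simp only [qCount] at hq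
      simp only [tsize] at hsz
      obtain ⟨hbF, hbB⟩ := bev_arr_false hb
      rw [extGo]
      rw [(ih (tsize B) (by have := tsize_pos F; omega)).2.1 B le_rfl (by omega) hbB _ n]
      simp only [Trm.fv, Set.mem_union]
      constructor
      · rintro (h | h)
        · exact h
        · exact absurd h ((ih (tsize F) (by have := tsize_pos B; omega)).1 F le_rfl (by omega) hbF n)
      · exact Or.inl
  · intro A B hsz hqA hbA hqB j n
    match B with
    | .var m =>
      rw [prove]
      rw [(ih (tsize A) (by simp [tsize] at hsz; omega)).2.1 A le_rfl hqA hbA _ n]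
      simp [Trm.fv]
    | .all B => simp [qCount] at hqB
    | .arr F C =>
      simp only [qCount] at hqB
      simp only [tsize] at hsz
      rw [prove]
      simp only [Trm.fv, Set.mem_setOf_eq]
      rw [(ih (tsize A + tsize C) (by have := tsize_pos F; omega)).2.2 A C le_rfl
        hqA hbA (by omega) (j+1) (n+1)]
      omega

end Stmt18

namespace Stmt18

/-! ### Non-λI lemmas -/

lemma notLI_lam_of_fv {u : Trm} (h : 0 ∉ Trm.fv u) : ¬ Trm.IsLI (.lam u) := by
  intro hl
  cases hl with
  | lam _ h0 => exact h h0

lemma notLI_lam {u : Trm} (h : ¬ Trm.IsLI u) : ¬ Trm.IsLI (.lam u) := by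
  intro hl
  cases hl with
  | lam h' _ => exact h h'

lemma notLI_appL {u v : Trm} (h : ¬ Trm.IsLI u) : ¬ Trm.IsLI (.app u v) := by
  intro hl
  cases hl with
  | app h' _ => exact h h'

lemma notLI_extGo : ∀ (A : Ty) (t : Trm), ¬ Trm.IsLI t → ¬ Trm.IsLI (extGo A t) := by
  intro A
  induction A with
  | var m => intro t h; rw [extGo]; exact h
  | all A ih => intro t h; rw [extGo]; exact h
  | arr F B ih1 ih2 => intro t h; rw [extGo]; exact ih2 _ (notLI_appL h)

lemma notLI_prove : ∀ (C A F : Ty) (j : ℕ), qCount A = 0 → bev A = false → qCount C = 0 →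
    ¬ Trm.IsLI (prove A (.arr F C) j) := by
  intro C
  induction C with
  | var m =>
    intro A F j hqA hbA _
    rw [prove, prove]
    refine notLI_lam_of_fv ?_
    rw [(fv_trio (tsize A)).2.1 A le_rfl hqA hbA (.var (j+1)) 0]
    simp [Trm.fv]
  | all C ih => intro A F j _ _ hqC; simp [qCount] at hqC
  | arr F' C' ih1 ih2 =>
    intro A F j hqA hbA hqC
    simp only [qCount] at hqC
    rw [prove]
    exact notLI_lam (ih2 A F' (j+1) hqA hbA (by omega))

end Stmt18

namespace Stmt18

lemma notLI_appR {u v : Trm} (h : ¬ Trm.IsLI v) : ¬ Trm.IsLI (.app u v) := by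
  intro hl
  cases hl with
  | app _ h' => exact h h'

lemma goodCtx_singleton {A : Ty} (h : qCount A = 0) : GoodCtx [A] := by
  intro B hB
  rcases List.mem_cons.mp hB with rfl | h'
  · exact proper_of_q0 _ h
  · cases h'

lemma closed_of_lam {u : Trm} (h : ∀ n, n ∈ Trm.fv u ↔ n = 0) : Trm.Closed (.lam u) := by
  rw [Trm.Closed]
  ext n
  simp only [Trm.fv, Set.mem_setOf_eq, Set.mem_empty_iff_false, iff_false]
  intro hn
  have := (h (n+1)).mp hn
  omega

end Stmt18


/-- a demonstrable I-type with exactly one quantifier is ∀X {X → X}. -/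
theorem stmt18 (D : Ty) (h1 : IType D) (h2 : (Lam D).Nonempty) (h3 : qCount D = 1) :
    D = Ty.all (Ty.arr (Ty.var 0) (Ty.var 0)) := by
  open Stmt18 in
  obtain ⟨hD, hI⟩ := h1
  obtain ⟨t, ht_normal, ht_closed, ht_typ⟩ := h2
  rw [Ty.ClosedTy] at hD
  cases D with
  | var n =>
    exfalso
    have : n ∈ Ty.tfv (.var n) := rfl
    rw [hD] at this
    exact this
  | arr A B =>
    exfalso
    simp only [qCount] at h3
    have hU : Ty.tfv A ∪ Ty.tfv B = ∅ := hD
    by_cases hA : qCount A = 0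
    · obtain ⟨m, hm⟩ := Stmt18.tfv_nonempty A hA
      have : m ∈ Ty.tfv A ∪ Ty.tfv B := Or.inl hm
      rw [hU] at this
      exact this
    · obtain ⟨m, hm⟩ := Stmt18.tfv_nonempty B (by omega)
      have : m ∈ Ty.tfv A ∪ Ty.tfv B := Or.inr hm
      rw [hU] at this
      exact this
  | all E =>
    have hq : qCount E = 0 := by simp only [qCount] at h3; omega
    have hsub : Ty.tfv E ⊆ {0} := by
      intro n hn
      match n with
      | 0 => rfl
      | m+1 =>
        exfalso
        have : m ∈ Ty.tfv (Ty.all E) := hn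
        rw [hD] at this
        exact this
    have h0 : 0 ∈ Ty.tfv E := by
      obtain ⟨m, hm⟩ := Stmt18.tfv_nonempty E hq
      have hm0 : m = 0 := hsub hm
      exact hm0 ▸ hm
    have hbev : Stmt18.bev E = true := by
      have hs := Stmt18.soundness ht_typ (fun _ => False) (by intro B hB; cases hB)
      have hs2 := hs False
      refine (Stmt18.bridge E hq _ (fun n hn => ?_)).mp hs2
      have hn0 : n = 0 := hsub hn
      subst hn0
      simp [Stmt18.consR]
    congr 1
    -- now: E with qCount E = 0, tfv E ⊆ {0}, 0 ∈ tfv E, bev E = true; show E = arr (var 0) (var 0)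
    cases E with
    | var m => simp [Stmt18.bev] at hbev
    | all E' => simp [qCount] at hq
    | arr A B =>
      simp only [qCount] at hq
      have hqA : qCount A = 0 := by omega
      have hqB : qCount B = 0 := by omega
      have htA : Ty.tfv A ⊆ {0} := fun n hn => hsub (Or.inl hn)
      have htB : Ty.tfv B ⊆ {0} := fun n hn => hsub (Or.inr hn)
      by_cases hbB : Stmt18.bev B = true
      · -- witness: λ_. inh B, ignores its argument
        exfalso
        set w : Trm := .lam (Stmt18.inh B) with hw
        have hty : Typing [] w (.all (.arr A B)) := by
          refine Typing.allI h0 ?_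
          refine Typing.arrI (Stmt18.proper_of_q0 A hqA) ?_
          exact (Stmt18.typing_trio (Stmt18.tsize B)).1 B le_rfl hqB htB hbB _
            (Stmt18.goodCtx_singleton hqA)
        have hnf : BetaNormal w :=
          Stmt18.betaNormal_of_nf (Stmt18.Nf.lam
            ((Stmt18.nf_trio (Stmt18.tsize B)).1 B le_rfl hqB hbB))
        have hcl : Trm.Closed w := by
          rw [Trm.Closed]
          ext n
          simp only [hw, Trm.fv, Set.mem_setOf_eq, Set.mem_empty_iff_false, iff_false]
          exact (Stmt18.fv_trio (Stmt18.tsize B)).1 B le_rfl hqB hbB (n+1)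
        have hli := hI w hnf hcl hty
        exact Stmt18.notLI_lam_of_fv
          ((Stmt18.fv_trio (Stmt18.tsize B)).1 B le_rfl hqB hbB 0) hli
      · have hbB' : Stmt18.bev B = false := by simpa using hbB
        have hbA : Stmt18.bev A = false := Stmt18.bev_arr_true hbev hbB'
        cases B with
        | all B' => simp [qCount] at hqB
        | arr F C =>
          -- witness: λx. λy⃗. (x applied to inhabitants) — inner lambdas vacuous
          exfalso
          set w : Trm := .lam (Stmt18.prove A (.arr F C) 0) with hw
          have hty : Typing [] w (.all (.arr A (.arr F C))) := by
            refine Typing.allI h0 ?_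
            refine Typing.arrI (Stmt18.proper_of_q0 A hqA) ?_
            exact (Stmt18.typing_trio (Stmt18.tsize A + Stmt18.tsize (.arr F C))).2.2
              A (.arr F C) le_rfl hqA htA hbA hqB htB _ 0
              (Stmt18.goodCtx_singleton hqA) (by simp)
          have hnf : BetaNormal w :=
            Stmt18.betaNormal_of_nf (Stmt18.Nf.lam
              ((Stmt18.nf_trio (Stmt18.tsize A + Stmt18.tsize (.arr F C))).2.2
                A (.arr F C) le_rfl hqA hbA hqB 0))
          have hcl : Trm.Closed w := by
            refine Stmt18.closed_of_lam (fun n => ?_)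
            exact (Stmt18.fv_trio (Stmt18.tsize A + Stmt18.tsize (.arr F C))).2.2
              A (.arr F C) le_rfl hqA hbA hqB 0 n
          have hli := hI w hnf hcl hty
          have hqC : qCount C = 0 := by simp only [qCount] at hqB; omega
          exact Stmt18.notLI_lam (Stmt18.notLI_prove C A F 0 hqA hbA hqC) hli
        | var mb =>
          have hmb : mb = 0 := htB rfl
          subst hmb
          cases A with
          | all A' => simp [qCount] at hqA
          | var ma =>
            have hma : ma = 0 := htA rfl
            subst hma
            rfl
          | arr F C =>
            -- witness: λx. extGo C (x (prove (F→C) F 0)); the proof of F ignores a variable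
            exfalso
            obtain ⟨hbF, hbC⟩ := Stmt18.bev_arr_false hbA
            simp only [qCount] at hqA
            have hqF : qCount F = 0 := by omega
            have hqC : qCount C = 0 := by omega
            have htF : Ty.tfv F ⊆ {0} := fun n hn => htA (Or.inl hn)
            have htC : Ty.tfv C ⊆ {0} := fun n hn => htA (Or.inr hn)
            have hqA' : qCount (Ty.arr F C) = 0 := by simp only [qCount]; omega
            have hgood : Stmt18.GoodCtx [Ty.arr F C] := Stmt18.goodCtx_singleton hqA'
            set w : Trm := .lam (Stmt18.extGo C
              (.app (.var 0) (Stmt18.prove (.arr F C) F 0))) with hw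
            have htyp : Typing [Ty.arr F C]
                (.app (.var 0) (Stmt18.prove (.arr F C) F 0)) C := by
              refine Typing.arrE (Typing.ax (A := Ty.arr F C) (by simp) hgood) ?_
              exact (Stmt18.typing_trio (Stmt18.tsize (.arr F C) + Stmt18.tsize F)).2.2
                (.arr F C) F le_rfl hqA' htA hbA hqF htF _ 0 hgood (by simp)
            have hty : Typing [] w (.all (.arr (.arr F C) (.var 0))) := by
              refine Typing.allI h0 ?_
              refine Typing.arrI (Stmt18.proper_of_q0 _ hqA') ?_
              exact (Stmt18.typing_trio (Stmt18.tsize C)).2.1 C le_rfl hqC htC hbC _ _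
                hgood htyp
            have hne : Stmt18.Ne (Stmt18.extGo C
                (.app (.var 0) (Stmt18.prove (.arr F C) F 0))) := by
              refine (Stmt18.nf_trio (Stmt18.tsize C)).2.1 C le_rfl hqC hbC _ ?_
              exact Stmt18.Ne.app (Stmt18.Ne.var 0)
                ((Stmt18.nf_trio (Stmt18.tsize (.arr F C) + Stmt18.tsize F)).2.2
                  (.arr F C) F le_rfl hqA' hbA hqF 0)
            have hnf : BetaNormal w :=
              Stmt18.betaNormal_of_nf (Stmt18.Nf.lam (Stmt18.Nf.ne hne))
            have hcl : Trm.Closed w := by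
              refine Stmt18.closed_of_lam (fun n => ?_)
              rw [(Stmt18.fv_trio (Stmt18.tsize C)).2.1 C le_rfl hqC hbC _ n]
              simp only [Trm.fv, Set.mem_union, Set.mem_singleton_iff]
              rw [(Stmt18.fv_trio (Stmt18.tsize (.arr F C) + Stmt18.tsize F)).2.2
                (.arr F C) F le_rfl hqA' hbA hqF 0 n]
              tauto
            have hli := hI w hnf hcl hty
            -- F must be an arrow since bev F = true
            obtain ⟨F1, F2, rfl⟩ : ∃ F1 F2, F = .arr F1 F2 := by
              match F, hbF, hqF with
              | .var mf, hbF, _ => simp [Stmt18.bev] at hbF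
              | .all F', _, hqF => simp [qCount] at hqF
              | .arr F1 F2, _, _ => exact ⟨F1, F2, rfl⟩
            have hqF2 : qCount F2 = 0 := by simp only [qCount] at hqF; omega
            refine Stmt18.notLI_lam (Stmt18.notLI_extGo C _ (Stmt18.notLI_appR ?_)) hli
            exact Stmt18.notLI_prove F2 (.arr (.arr F1 F2) C) F1 0 hqA' hbA hqF2
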